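/- Majorized dual difference bound: under assumptions (A2), (A4) and (A5), along the asynchronous majorized ADMM iterates one has y_{kj}^{t+1} = −[∇_x f_k(x_k^{t+1}, z_k^{[t+1]_k})]_j for all j ∈ N_k, and consequently for every node k and every t: Σ_{j∈N_k} ‖y_{kj}^{t+1} − y_{kj}^t‖² ≤ 2L_k² ‖x_k^{t+1} − x_k^t‖² + 2L_k²(T_k+1) Σ_{d=0}^{T_k} Σ_{j∈N_k} ‖z_j^{t+1−d} − z_j^{t−d}‖². -/

import Mathlib

open Filter Topology RealInnerProductSpace

noncomputable section

/-- Zero-padded restriction of a vector of nodal variables to a neighborhood: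
coordinates outside the neighborhood are set to zero. -/
def restr {K : ℕ} (Nk : Finset (Fin K)) (v : Fin K → ℝ) : EuclideanSpace ℝ (Fin K) :=
  WithLp.toLp 2 (fun j => if j ∈ Nk then v j else 0)

/-- The setting of the asynchronous majorized ADMM: network data, majorizing
surrogates, assumptions (A2) and (A4), and the algorithmic update equations
(i)-(iii) together with the delay bounds and the update-frequency condition. -/
structure MajADMM (K : ℕ) where
  /-- neighborhoods, `j ∈ Nb k` means `j ∈ N_k` -/
  Nb : Fin K → Finset (Fin K)
  self_mem : ∀ k, k ∈ Nb k
  symm : ∀ k j, j ∈ Nb k ↔ k ∈ Nb j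
  /-- local cost of node `k`, as a function of the zero-padded neighborhood variables -/
  g : Fin K → EuclideanSpace ℝ (Fin K) → ℝ
  g_local : ∀ k v w, (∀ j ∈ Nb k, v j = w j) → g k v = g k w
  g_diff : ∀ k, Differentiable ℝ (g k)
  /-- the majorizing surrogate `f_k(x, z̃)` -/
  F : Fin K → EuclideanSpace ℝ (Fin K) → EuclideanSpace ℝ (Fin K) → ℝ
  F_local : ∀ k v w zt, (∀ j ∈ Nb k, v j = w j) → F k v zt = F k w zt
  F_diff : ∀ k zt, Differentiable ℝ (fun v => F k v zt)
  F_convex : ∀ k zt, ConvexOn ℝ Set.univ (fun v => F k v zt)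
  /-- majorization: `g_k(x) ≤ f_k(x, z̃)` -/
  F_major : ∀ k v zt, g k v ≤ F k v zt
  /-- tightness: `f_k(z̃, z̃) = g_k(z̃)` -/
  F_touch : ∀ k zt, F k zt zt = g k zt
  /-- gradient consistency: `∇_x f_k(x, z̃)|_{x = z̃} = ∇g_k(z̃)` -/
  F_grad_touch : ∀ k zt, gradient (fun v => F k v zt) zt = gradient (g k) zt
  /-- the Lipschitz constants of (A4) -/
  L : Fin K → ℝ
  L_nonneg : ∀ k, 0 ≤ L k
  /-- (A4): `∇g_k` is `L_k`-Lipschitz -/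
  g_grad_lip : ∀ k v w, ‖gradient (g k) v - gradient (g k) w‖ ≤ L k * ‖v - w‖
  /-- (A4): `∇_x f_k(·, z̃)` is `L_k`-Lipschitz -/
  F_grad_lip_x : ∀ k zt v w,
    ‖gradient (fun u => F k u zt) v - gradient (fun u => F k u zt) w‖ ≤ L k * ‖v - w‖
  /-- (A4): `∇_x f_k(x, ·)` is `L_k`-Lipschitz -/
  F_grad_lip_z : ∀ k v zt zt',
    ‖gradient (fun u => F k u zt) v - gradient (fun u => F k u zt') v‖ ≤ L k * ‖zt - zt'‖
  /-- the convex nonsmooth part -/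
  h : Fin K → ℝ → ℝ
  h_convex : ∀ k, ConvexOn ℝ Set.univ (h k)
  /-- the constraint sets -/
  Xs : Fin K → Set ℝ
  Xs_nonempty : ∀ k, (Xs k).Nonempty
  Xs_compact : ∀ k, IsCompact (Xs k)
  Xs_convex : ∀ k, Convex ℝ (Xs k)
  /-- (A2): `g k` is bounded below over the constraint set -/
  g_bddBelow : ∀ k, ∃ b, ∀ v : Fin K → ℝ, (∀ j, v j ∈ Xs j) → b ≤ g k (restr (Nb k) v)
  /-- penalty parameters -/
  ρ : Fin K → ℝ
  ρ_pos : ∀ k, 0 < ρ k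
  /-- update frequencies `f_k` -/
  freq : Fin K → ℝ
  freq_pos : ∀ k, 0 < freq k
  freq_le_one : ∀ k, freq k ≤ 1
  /-- maximum delays `T_k` -/
  Td : Fin K → ℕ
  /-- updating sets `S^t` -/
  Sset : ℕ → Finset (Fin K)
  /-- delayed index: `τ t k = [t+1]_k` -/
  τ : ℕ → Fin K → ℕ
  τ_le : ∀ t k, τ t k ≤ t + 1
  τ_ge : ∀ t k, t + 1 ≤ τ t k + Td k
  /-- iterates -/
  x : ℕ → Fin K → Fin K → ℝ
  z : ℕ → Fin K → ℝ
  y : ℕ → Fin K → Fin K → ℝ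
  z_init_mem : ∀ j, z 0 j ∈ Xs j
  /-- (i): feasibility of the `z`-update -/
  z_update_mem : ∀ t j, j ∈ Sset t → z (t + 1) j ∈ Xs j
  /-- (i): for `j ∈ S^t`, `z_j^{t+1}` minimizes the `j`-th block over `X_j` -/
  z_update_min : ∀ t j, j ∈ Sset t → IsMinOn
      (fun w => h j w + ∑ k ∈ Nb j, (y t k j * (x t k j - w) + ρ k / 2 * (x t k j - w) ^ 2))
      (Xs j) (z (t + 1) j)
  /-- (i): non-updating nodes keep their old value -/
  z_noupdate : ∀ t j, j ∉ Sset t → z (t + 1) j = z t j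
  /-- `x_{kj} = 0` outside the neighborhood -/
  x_pad : ∀ t k j, j ∉ Nb k → x t k j = 0
  /-- (ii): majorized `x`-update with delayed linearization point -/
  x_update : ∀ t k, IsMinOn
      (fun v : EuclideanSpace ℝ (Fin K) =>
        F k v (restr (Nb k) (z (τ t k)))
          + ∑ j ∈ Nb k, (y t k j * (v j - z (t + 1) j) + ρ k / 2 * (v j - z (t + 1) j) ^ 2))
      Set.univ (restr (Nb k) (x (t + 1) k))
  /-- (iii): dual update -/
  y_update : ∀ t k, ∀ j ∈ Nb k,
      y (t + 1) k j = y t k j + ρ k * (x (t + 1) k j - z (t + 1) j)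
  /-- in any window of `T` consecutive iterations node `k` updates at least `f_k T` times -/
  update_freq : ∀ k (t₀ T : ℕ),
      freq k * T ≤ ((Finset.Ico t₀ (t₀ + T)).filter (fun t => k ∈ Sset t)).card

/-- The augmented Lagrangian. -/
def MajADMM.Lag {K : ℕ} (P : MajADMM K) (xx : Fin K → Fin K → ℝ) (zz : Fin K → ℝ)
    (yy : Fin K → Fin K → ℝ) : ℝ :=
  ∑ k, (P.g k (restr (P.Nb k) (xx k)) + P.h k (zz k)
    + ∑ j ∈ P.Nb k, (yy k j * (xx k j - zz j) + P.ρ k / 2 * (xx k j - zz j) ^ 2))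

end


section Aux

lemma grad_coord {K : ℕ} (f : EuclideanSpace ℝ (Fin K) → ℝ) (x : EuclideanSpace ℝ (Fin K))
    (j : Fin K) : gradient f x j = fderiv ℝ f x (EuclideanSpace.single j 1) := by
  have : ⟪gradient f x, EuclideanSpace.single j 1⟫ = fderiv ℝ f x (EuclideanSpace.single j 1) := by
    rw [gradient]; exact InnerProductSpace.toDual_symm_apply
  rw [← this, real_inner_comm, EuclideanSpace.inner_single_left]
  simp

lemma tele_sq (u : ℕ → ℝ) (t T a b : ℕ) (ha : a ≤ t + 1) (hb : b ≤ t + 1)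
    (ha' : t ≤ a + T) (hb' : t ≤ b + T) :
    (u a - u b) ^ 2 ≤ (T + 1 : ℝ) * ∑ d ∈ Finset.range (T + 1), (u (t + 1 - d) - u (t - d)) ^ 2 := by
  wlog hba : b ≤ a with H
  · have := H u t T b a hb ha hb' ha' (le_of_not_ge hba)
    calc (u a - u b) ^ 2 = (u b - u a) ^ 2 := by ring
    _ ≤ _ := this
  have htel : u a - u b = ∑ s ∈ Finset.Ico b a, (u (s + 1) - u s) := by
    rw [Finset.sum_Ico_eq_sub _ hba]
    rw [Finset.sum_sub_distrib, Finset.sum_sub_distrib]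
    have h1 : ∀ n, ∑ s ∈ Finset.range n, u (s + 1) = (∑ s ∈ Finset.range n, u s) + u n - u 0 := by
      intro n
      induction n with
      | zero => simp
      | succ m ih => rw [Finset.sum_range_succ, ih, Finset.sum_range_succ]; ring
    rw [h1, h1]; ring
  have hinj : Set.InjOn (fun s => t - s) (Finset.Ico b a) := by
    intro s hs s' hs' h
    simp only [Finset.coe_Ico, Set.mem_Ico] at hs hs'
    simp only at h
    omega
  have hsum : ∑ s ∈ Finset.Ico b a, (u (s + 1) - u s) ^ 2
      ≤ ∑ d ∈ Finset.range (T + 1), (u (t + 1 - d) - u (t - d)) ^ 2 := by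
    have himg : ∑ d ∈ (Finset.Ico b a).image (fun s => t - s),
        (u (t + 1 - d) - u (t - d)) ^ 2 = ∑ s ∈ Finset.Ico b a, (u (s + 1) - u s) ^ 2 := by
      rw [Finset.sum_image (fun x hx y hy h => hinj (by simpa using hx) (by simpa using hy) h)]
      apply Finset.sum_congr rfl
      intro s hs
      simp only [Finset.mem_Ico] at hs
      have h1 : t + 1 - (t - s) = s + 1 := by omega
      have h2 : t - (t - s) = s := by omega
      rw [h1, h2]
    rw [← himg]
    apply Finset.sum_le_sum_of_subset_of_nonneg
    · intro d hd
      simp only [Finset.mem_image, Finset.mem_Ico] at hd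
      obtain ⟨s, hs, rfl⟩ := hd
      simp only [Finset.mem_range]
      omega
    · intro _ _ _; positivity
  calc (u a - u b) ^ 2 = (∑ s ∈ Finset.Ico b a, (u (s + 1) - u s)) ^ 2 := by rw [htel]
  _ ≤ ((Finset.Ico b a).card : ℝ) * ∑ s ∈ Finset.Ico b a, (u (s + 1) - u s) ^ 2 :=
      sq_sum_le_card_mul_sum_sq
  _ ≤ (T + 1 : ℝ) * ∑ d ∈ Finset.range (T + 1), (u (t + 1 - d) - u (t - d)) ^ 2 := by
      apply mul_le_mul
      · rw [Nat.card_Ico]; have hab : a - b ≤ T + 1 := by omega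
        exact_mod_cast hab
      · exact hsum
      · exact Finset.sum_nonneg fun _ _ => sq_nonneg _
      · positivity

end Aux
lemma dual_grad {K : ℕ} (P : MajADMM K) (t : ℕ) (k : Fin K) :
    ∀ j ∈ P.Nb k, P.y (t + 1) k j
      = - gradient (fun v => P.F k v (restr (P.Nb k) (P.z (P.τ t k))))
          (restr (P.Nb k) (P.x (t + 1) k)) j := by
  intro j hj
  set zt := restr (P.Nb k) (P.z (P.τ t k)) with hzt
  set xh : EuclideanSpace ℝ (Fin K) := restr (P.Nb k) (P.x (t + 1) k) with hxh
  set c : Fin K → ℝ := fun j' => P.y t k j' + P.ρ k * (xh j' - P.z (t + 1) j') with hc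
  set D : EuclideanSpace ℝ (Fin K) →L[ℝ] ℝ :=
    ∑ j' ∈ P.Nb k, c j' • (EuclideanSpace.proj j' : EuclideanSpace ℝ (Fin K) →L[ℝ] ℝ) with hD
  have hQ : HasFDerivAt (fun v : EuclideanSpace ℝ (Fin K) =>
      ∑ j' ∈ P.Nb k, (P.y t k j' * (v j' - P.z (t + 1) j')
        + P.ρ k / 2 * (v j' - P.z (t + 1) j') ^ 2)) D xh := by
    rw [hD]
    apply HasFDerivAt.fun_sum
    intro j' _
    have hψ : HasDerivAt (fun s : ℝ => P.y t k j' * (s - P.z (t + 1) j')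
        + P.ρ k / 2 * (s - P.z (t + 1) j') ^ 2) (c j') (xh j') := by
      have h1 : HasDerivAt (fun s : ℝ => s - P.z (t + 1) j') 1 (xh j') :=
        (hasDerivAt_id _).sub_const _
      have h2 := (h1.const_mul (P.y t k j')).add ((h1.pow 2).const_mul (P.ρ k / 2))
      refine h2.congr_deriv ?_
      rw [hc]; ring
    have hproj : HasFDerivAt (fun v : EuclideanSpace ℝ (Fin K) => v j')
        (EuclideanSpace.proj j' : EuclideanSpace ℝ (Fin K) →L[ℝ] ℝ) xh :=
      (EuclideanSpace.proj j' : EuclideanSpace ℝ (Fin K) →L[ℝ] ℝ).hasFDerivAt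
    exact hψ.comp_hasFDerivAt xh hproj
  have hF : HasFDerivAt (fun v => P.F k v zt) (fderiv ℝ (fun v => P.F k v zt) xh) xh :=
    (P.F_diff k zt xh).hasFDerivAt
  have hmin : IsLocalMin (fun v : EuclideanSpace ℝ (Fin K) =>
      P.F k v zt + ∑ j' ∈ P.Nb k, (P.y t k j' * (v j' - P.z (t + 1) j')
        + P.ρ k / 2 * (v j' - P.z (t + 1) j') ^ 2)) xh :=
    (P.x_update t k).isLocalMin Filter.univ_mem
  have hzero : fderiv ℝ (fun v => P.F k v zt) xh + D = 0 :=
    hmin.hasFDerivAt_eq_zero (hF.add hQ)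
  have hDval : D (EuclideanSpace.single j 1) = c j := by
    rw [hD, ContinuousLinearMap.sum_apply]
    rw [Finset.sum_eq_single j]
    · simp [EuclideanSpace.single_apply]
    · intro j' _ hne
      simp [EuclideanSpace.single_apply, hne]
    · intro h; exact absurd hj h
  have hfd : fderiv ℝ (fun v => P.F k v zt) xh (EuclideanSpace.single j 1) = - c j := by
    have := congrArg (fun L : EuclideanSpace ℝ (Fin K) →L[ℝ] ℝ =>
      L (EuclideanSpace.single j 1)) hzero
    simp only [ContinuousLinearMap.add_apply, ContinuousLinearMap.zero_apply] at this
    rw [hDval] at this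
    linarith
  rw [grad_coord, hfd, hc]
  simp only [neg_neg]
  have hxhj : xh j = P.x (t + 1) k j := by rw [hxh]; simp [restr, hj]
  rw [P.y_update t k j hj, hxhj]
lemma key_grad_bound {K : ℕ} (P : MajADMM K) (k : Fin K)
    (zt1 zt0 xh1 xh0 : EuclideanSpace ℝ (Fin K)) :
    ∑ j ∈ P.Nb k, (gradient (fun v => P.F k v zt1) xh1 j
        - gradient (fun v => P.F k v zt0) xh0 j) ^ 2
      ≤ 2 * P.L k ^ 2 * ‖xh1 - xh0‖ ^ 2 + 2 * P.L k ^ 2 * ‖zt1 - zt0‖ ^ 2 := by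
  set G1 := gradient (fun v => P.F k v zt1) xh1 with hG1
  set G0 := gradient (fun v => P.F k v zt0) xh0 with hG0
  set G2 := gradient (fun v => P.F k v zt1) xh0 with hG2
  have h3 : ‖G1 - G0‖ ≤ P.L k * ‖xh1 - xh0‖ + P.L k * ‖zt1 - zt0‖ := by
    have t1 := P.F_grad_lip_x k zt1 xh1 xh0
    have t2 := P.F_grad_lip_z k xh0 zt1 zt0
    calc ‖G1 - G0‖ = ‖(G1 - G2) + (G2 - G0)‖ := by rw [sub_add_sub_cancel]
    _ ≤ ‖G1 - G2‖ + ‖G2 - G0‖ := norm_add_le _ _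
    _ ≤ _ := add_le_add t1 t2
  have h4 : ‖G1 - G0‖ ^ 2 ≤ (P.L k * ‖xh1 - xh0‖ + P.L k * ‖zt1 - zt0‖) ^ 2 :=
    pow_le_pow_left₀ (norm_nonneg _) h3 2
  calc ∑ j ∈ P.Nb k, (G1 j - G0 j) ^ 2
      ≤ ∑ j : Fin K, (G1 j - G0 j) ^ 2 :=
        Finset.sum_le_sum_of_subset_of_nonneg (Finset.subset_univ _) (fun _ _ _ => sq_nonneg _)
  _ = ‖G1 - G0‖ ^ 2 := by
        rw [PiLp.norm_sq_eq_of_L2]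
        apply Finset.sum_congr rfl
        intro j _
        rw [Real.norm_eq_abs, sq_abs]
        rfl
  _ ≤ (P.L k * ‖xh1 - xh0‖ + P.L k * ‖zt1 - zt0‖) ^ 2 := h4
  _ ≤ 2 * P.L k ^ 2 * ‖xh1 - xh0‖ ^ 2 + 2 * P.L k ^ 2 * ‖zt1 - zt0‖ ^ 2 := by
        nlinarith [sq_nonneg (P.L k * ‖xh1 - xh0‖ - P.L k * ‖zt1 - zt0‖)]

lemma restr_z_bound {K : ℕ} (P : MajADMM K) (k : Fin K) (t a b : ℕ)
    (ha : a ≤ t + 1) (hb : b ≤ t + 1) (ha' : t ≤ a + P.Td k) (hb' : t ≤ b + P.Td k) :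
    ‖restr (P.Nb k) (P.z a) - restr (P.Nb k) (P.z b)‖ ^ 2
      ≤ ((P.Td k : ℝ) + 1) * ∑ d ∈ Finset.range (P.Td k + 1), ∑ j ∈ P.Nb k,
          (P.z (t + 1 - d) j - P.z (t - d) j) ^ 2 := by
  have h1 : ‖restr (P.Nb k) (P.z a) - restr (P.Nb k) (P.z b)‖ ^ 2
      = ∑ j ∈ P.Nb k, (P.z a j - P.z b j) ^ 2 := by
    rw [PiLp.norm_sq_eq_of_L2]
    rw [← Finset.sum_subset (Finset.subset_univ (P.Nb k))]
    · apply Finset.sum_congr rfl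
      intro j hj
      rw [Real.norm_eq_abs, sq_abs]
      have : (restr (P.Nb k) (P.z a) - restr (P.Nb k) (P.z b)) j
          = P.z a j - P.z b j := by
        show restr (P.Nb k) (P.z a) j - restr (P.Nb k) (P.z b) j = _
        simp [restr, hj]
      rw [this]
    · intro j _ hj
      have : (restr (P.Nb k) (P.z a) - restr (P.Nb k) (P.z b)) j = 0 := by
        show restr (P.Nb k) (P.z a) j - restr (P.Nb k) (P.z b) j = 0
        simp [restr, hj]
      rw [this]
      simp
  rw [h1]
  calc ∑ j ∈ P.Nb k, (P.z a j - P.z b j) ^ 2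
      ≤ ∑ j ∈ P.Nb k, ((P.Td k : ℝ) + 1) * ∑ d ∈ Finset.range (P.Td k + 1),
          (P.z (t + 1 - d) j - P.z (t - d) j) ^ 2 := by
        apply Finset.sum_le_sum
        intro j _
        exact tele_sq (fun n => P.z n j) t (P.Td k) a b ha hb ha' hb'
  _ = ((P.Td k : ℝ) + 1) * ∑ d ∈ Finset.range (P.Td k + 1), ∑ j ∈ P.Nb k,
          (P.z (t + 1 - d) j - P.z (t - d) j) ^ 2 := by
        rw [← Finset.mul_sum, Finset.sum_comm]
/-- Majorized dual difference bound (asynchronous majorized ADMM, assumptions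
(A2), (A4), (A5)): the dual iterates satisfy
`y_{kj}^{t+1} = −[∇_x f_k(x_k^{t+1}, z_k^{[t+1]_k})]_j`, and consequently the
squared dual differences are bounded by the `x`- and delayed `z`-differences. -/
theorem maj_admm_dual_difference_bound {K : ℕ} (P : MajADMM K)
    (α β : Fin K → ℝ)
    (hα : ∀ k, α k = ((P.Nb k).card : ℝ) *
      (P.ρ k * P.freq k / 2
        - (8 * P.L k / P.ρ k ^ 2 + 1 / P.ρ k) * P.L k ^ 2 * ((P.Td k : ℝ) + 1) ^ 2
        - P.L k * (P.Td k : ℝ) ^ 2 / 2))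
    (hβ : ∀ k, β k = (P.ρ k - 9 * P.L k) / 2 - 8 * P.L k ^ 3 / P.ρ k ^ 2)
    (hA5 : ∀ k, 0 < α k ∧ 0 < β k)
    (t : ℕ) (ht : 1 ≤ t) (k : Fin K) :
    (∀ j ∈ P.Nb k,
      P.y (t + 1) k j
        = - gradient (fun v => P.F k v (restr (P.Nb k) (P.z (P.τ t k))))
            (restr (P.Nb k) (P.x (t + 1) k)) j) ∧
    ∑ j ∈ P.Nb k, ‖P.y (t + 1) k j - P.y t k j‖ ^ 2
      ≤ 2 * P.L k ^ 2 * ‖restr (P.Nb k) (P.x (t + 1) k) - restr (P.Nb k) (P.x t k)‖ ^ 2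
        + 2 * P.L k ^ 2 * ((P.Td k : ℝ) + 1) *
            ∑ d ∈ Finset.range (P.Td k + 1), ∑ j ∈ P.Nb k,
              ‖P.z (t + 1 - d) j - P.z (t - d) j‖ ^ 2 := by

  obtain ⟨s, rfl⟩ : ∃ s, t = s + 1 := ⟨t - 1, by omega⟩
  refine ⟨dual_grad P (s + 1) k, ?_⟩
  have hzsq : ‖restr (P.Nb k) (P.z (P.τ (s + 1) k)) - restr (P.Nb k) (P.z (P.τ s k))‖ ^ 2
      ≤ ((P.Td k : ℝ) + 1) * ∑ d ∈ Finset.range (P.Td k + 1), ∑ j ∈ P.Nb k,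
          (P.z (s + 1 + 1 - d) j - P.z (s + 1 - d) j) ^ 2 := by
    apply restr_z_bound P k (s + 1) (P.τ (s + 1) k) (P.τ s k)
    · exact P.τ_le (s + 1) k
    · have := P.τ_le s k; omega
    · have := P.τ_ge (s + 1) k; omega
    · have := P.τ_ge s k; omega
  have hL2 : (0 : ℝ) ≤ 2 * P.L k ^ 2 := by positivity
  calc ∑ j ∈ P.Nb k, ‖P.y (s + 1 + 1) k j - P.y (s + 1) k j‖ ^ 2
      = ∑ j ∈ P.Nb k, (gradient (fun v => P.F k v (restr (P.Nb k) (P.z (P.τ (s + 1) k))))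
            (restr (P.Nb k) (P.x (s + 1 + 1) k)) j
          - gradient (fun v => P.F k v (restr (P.Nb k) (P.z (P.τ s k))))
            (restr (P.Nb k) (P.x (s + 1) k)) j) ^ 2 := by
        apply Finset.sum_congr rfl
        intro j hj
        rw [dual_grad P (s + 1) k j hj, dual_grad P s k j hj, Real.norm_eq_abs, sq_abs]
        ring
  _ ≤ 2 * P.L k ^ 2 * ‖restr (P.Nb k) (P.x (s + 1 + 1) k) - restr (P.Nb k) (P.x (s + 1) k)‖ ^ 2
        + 2 * P.L k ^ 2 * ‖restr (P.Nb k) (P.z (P.τ (s + 1) k))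
            - restr (P.Nb k) (P.z (P.τ s k))‖ ^ 2 :=
        key_grad_bound P k _ _ _ _
  _ ≤ 2 * P.L k ^ 2 * ‖restr (P.Nb k) (P.x (s + 1 + 1) k) - restr (P.Nb k) (P.x (s + 1) k)‖ ^ 2
        + 2 * P.L k ^ 2 * (((P.Td k : ℝ) + 1) * ∑ d ∈ Finset.range (P.Td k + 1), ∑ j ∈ P.Nb k,
            (P.z (s + 1 + 1 - d) j - P.z (s + 1 - d) j) ^ 2) := by
        have := mul_le_mul_of_nonneg_left hzsq hL2
        linarith
  _ = 2 * P.L k ^ 2 * ‖restr (P.Nb k) (P.x (s + 1 + 1) k) - restr (P.Nb k) (P.x (s + 1) k)‖ ^ 2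
        + 2 * P.L k ^ 2 * ((P.Td k : ℝ) + 1) *
            ∑ d ∈ Finset.range (P.Td k + 1), ∑ j ∈ P.Nb k,
              ‖P.z (s + 1 + 1 - d) j - P.z (s + 1 - d) j‖ ^ 2 := by
        simp only [Real.norm_eq_abs, sq_abs]
        ring
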